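/- arXiv:2102.13220 — 2 statements merged into one kernel-verified Lean document; each statement's English description precedes it below -/
import Mathlib

section
/- Let G be a simple 3-regular graph on n vertices, Q_G = (1/2)(I_n − A_G/3), k a positive integer, and p_G(x) = x^T Q_G x · ∏_{i=1}^n (n x_i^2)^k. For any δ with (2 log 2)/k ≤ δ < n, set η = n/√(n + δ). Then for every x ∈ ℝ^n with ‖x‖_2 = 1 and ‖x‖_1 ≤ η, one has p_G(x) ≤ MaxCut(G). Consequently, with T_δ = { x ∈ ℝ^n : ‖x‖_2 = 1, ‖x‖_1 ≥ η }, the maximum of p_G over the unit sphere equals its maximum over T_δ. -/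
open Matrix

/-- `Q_G = (1/2)(I − A_G/3)` for a 3-regular graph `G`. -/
noncomputable def QG (n : ℕ) (G : SimpleGraph (Fin n)) [DecidableRel G.Adj] :
    Matrix (Fin n) (Fin n) ℝ :=
  (2 : ℝ)⁻¹ • ((1 : Matrix (Fin n) (Fin n) ℝ) - (3 : ℝ)⁻¹ • G.adjMatrix ℝ)

/-- `MaxCut(G) = max_{x ∈ {±1/√n}ⁿ} xᵀ Q_G x`. -/
noncomputable def maxCutVal (n : ℕ) (G : SimpleGraph (Fin n)) [DecidableRel G.Adj] : ℝ :=
  sSup {w : ℝ | ∃ x : Fin n → ℝ,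
    (∀ i, x i = 1 / Real.sqrt n ∨ x i = -(1 / Real.sqrt n)) ∧
    w = x ⬝ᵥ (QG n G).mulVec x}

/-- `p_G(x) = xᵀ Q_G x · ∏ᵢ (n xᵢ²)^k`. -/
noncomputable def pG (n : ℕ) (G : SimpleGraph (Fin n)) [DecidableRel G.Adj]
    (k : ℕ) (x : EuclideanSpace ℝ (Fin n)) : ℝ :=
  (x ⬝ᵥ (QG n G).mulVec x) * ∏ i, ((n : ℝ) * (x i) ^ 2) ^ k

/-- AM-GM corollary: product of nonneg reals vs `(mean)^n`. -/
lemma amgm_aux {n : ℕ} (hn : 0 < n) (z : Fin n → ℝ) (hz : ∀ i, 0 ≤ z i) :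
    ∏ i, z i ≤ ((∑ i, z i) / n) ^ n := by
  have hw : ∑ _i : Fin n, ((n:ℝ)⁻¹) = 1 := by
    simp [Finset.sum_const, Finset.card_univ]
    field_simp
  have h := Real.geom_mean_le_arith_mean_weighted Finset.univ
    (fun _ => (n:ℝ)⁻¹) z (fun i _ => by positivity) hw (fun i _ => hz i)
  rw [Real.finset_prod_rpow _ _ (fun i _ => hz i)] at h
  have h2 : ∑ i, (n:ℝ)⁻¹ * z i = (∑ i, z i) / n := by
    rw [← Finset.mul_sum]; ring
  rw [h2] at h
  have hzn : (0:ℝ) ≤ ∏ i, z i := Finset.prod_nonneg (fun i _ => hz i)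
  calc ∏ i, z i = ((∏ i, z i) ^ ((n:ℝ)⁻¹)) ^ (n:ℕ) := by
        rw [← Real.rpow_natCast ((∏ i, z i) ^ ((n:ℝ)⁻¹)) n, ← Real.rpow_mul hzn]
        rw [inv_mul_cancel₀ (by exact_mod_cast hn.ne')]
        simp
    _ ≤ ((∑ i, z i) / n) ^ (n:ℕ) := by
        exact pow_le_pow_left₀ (Real.rpow_nonneg hzn _) h n

/-- The quadratic form of `QG` is at most 1 on the unit sphere. -/
lemma quad_le_one {n : ℕ} (G : SimpleGraph (Fin n)) [DecidableRel G.Adj]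
    (hreg : G.IsRegularOfDegree 3) (x : Fin n → ℝ) (hx : ∑ i, x i ^ 2 = 1) :
    x ⬝ᵥ (QG n G).mulVec x ≤ 1 := by
  have hA : -3 ≤ x ⬝ᵥ (G.adjMatrix ℝ).mulVec x := by
    rw [SimpleGraph.dotProduct_mulVec_adjMatrix]
    have h1 : ∀ i : Fin n, ∑ j, (if G.Adj i j then x i ^ 2 else 0) = 3 * x i ^ 2 := by
      intro i
      rw [← Finset.sum_filter, Finset.sum_const, ← SimpleGraph.neighborFinset_eq_filter]
      rw [show (G.neighborFinset i).card = G.degree i from rfl, hreg i]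
      ring
    have h2 : ∀ j : Fin n, ∑ i, (if G.Adj i j then x j ^ 2 else 0) = 3 * x j ^ 2 := by
      intro j
      have : ∀ i, (if G.Adj i j then x j ^ 2 else 0) = (if G.Adj j i then x j ^ 2 else 0) := by
        intro i; simp [SimpleGraph.adj_comm]
      rw [Finset.sum_congr rfl (fun i _ => this i)]
      exact h1 j
    have key : ∑ i, ∑ j, (if G.Adj i j then -((x i ^ 2 + x j ^ 2) / 2) else 0)
        ≤ ∑ i, ∑ j, (if G.Adj i j then x i * x j else 0) := by
      apply Finset.sum_le_sum; intro i _
      apply Finset.sum_le_sum; intro j _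
      by_cases h : G.Adj i j
      · simp only [h, if_true]; nlinarith [sq_nonneg (x i + x j)]
      · simp [h]
    have lhs_eq : ∑ i, ∑ j, (if G.Adj i j then -((x i ^ 2 + x j ^ 2) / 2) else 0) = -3 := by
      have : ∀ i j, (if G.Adj i j then -((x i ^ 2 + x j ^ 2) / 2) else 0)
          = -(1/2) * ((if G.Adj i j then x i ^ 2 else 0) + (if G.Adj i j then x j ^ 2 else 0)) := by
        intro i j; by_cases h : G.Adj i j <;> simp [h]; ring
      simp only [this, ← Finset.mul_sum]
      have : ∑ i, ∑ j, ((if G.Adj i j then x i ^ 2 else 0) + (if G.Adj i j then x j ^ 2 else 0))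
          = 6 := by
        simp only [Finset.sum_add_distrib]
        have e1 : ∑ i : Fin n, ∑ j, (if G.Adj i j then x i ^ 2 else 0) = 3 := by
          simp only [h1, ← Finset.mul_sum, hx, mul_one]
        have e2 : ∑ i : Fin n, ∑ j, (if G.Adj i j then x j ^ 2 else 0) = 3 := by
          rw [Finset.sum_comm]
          simp only [h2, ← Finset.mul_sum, hx, mul_one]
        rw [e1, e2]; norm_num
      rw [this]; norm_num
    linarith
  have hq : x ⬝ᵥ (QG n G).mulVec x
      = 2⁻¹ * ((∑ i, x i ^ 2) - 3⁻¹ * (x ⬝ᵥ (G.adjMatrix ℝ).mulVec x)) := by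
    unfold QG
    rw [smul_mulVec, dotProduct_smul, sub_mulVec, smul_mulVec, one_mulVec,
      dotProduct_sub, dotProduct_smul]
    simp [dotProduct, smul_eq_mul, sq]
  rw [hq, hx]
  linarith

lemma sign_prod_sum {n : ℕ} {i j : Fin n} (hij : i ≠ j) :
    ∑ s : Fin n → Bool, ((if s i then (1:ℝ) else -1) * (if s j then (1:ℝ) else -1)) = 0 := by
  set f : (Fin n → Bool) → ℝ :=
    fun s => (if s i then (1:ℝ) else -1) * (if s j then (1:ℝ) else -1) with hf
  have hinv : Function.Involutive (fun s : Fin n → Bool => Function.update s i (!s i)) := by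
    intro s; funext t
    by_cases h : t = i
    · subst h; simp
    · simp [Function.update_of_ne h]
  have hneg : ∀ s, f ((Function.Involutive.toPerm _ hinv) s) = - f s := by
    intro s
    simp only [hf, Function.Involutive.coe_toPerm]
    rw [Function.update_self, Function.update_of_ne (Ne.symm hij)]
    cases h1 : s i <;> cases h2 : s j <;> norm_num
  have := Equiv.sum_comp (Function.Involutive.toPerm _ hinv) f
  rw [Finset.sum_congr rfl (fun s _ => hneg s), Finset.sum_neg_distrib] at this
  linarith

lemma QG_diag {n : ℕ} (G : SimpleGraph (Fin n)) [DecidableRel G.Adj] (i : Fin n) :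
    QG n G i i = 2⁻¹ := by
  simp [QG, Matrix.smul_apply, Matrix.sub_apply, Matrix.one_apply_eq]

/-- averaging: some sign vector achieves at least `1/2`. -/
lemma exists_good_sign {n : ℕ} (hn : 0 < n) (G : SimpleGraph (Fin n)) [DecidableRel G.Adj] :
    ∃ x : Fin n → ℝ, (∀ i, x i = 1 / Real.sqrt n ∨ x i = -(1 / Real.sqrt n)) ∧
      (1:ℝ)/2 ≤ x ⬝ᵥ (QG n G).mulVec x := by
  set F : (Fin n → Bool) → (Fin n → ℝ) :=
    fun s i => (if s i then (1:ℝ) else -1) / Real.sqrt n with hF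
  have hn' : (0:ℝ) < n := by exact_mod_cast hn
  have hFF : ∀ s (i j : Fin n), F s i * F s j
      = ((if s i then (1:ℝ) else -1) * (if s j then (1:ℝ) else -1)) / n := by
    intro s i j
    simp only [hF]
    rw [div_mul_div_comm, Real.mul_self_sqrt hn'.le]
  set f : (Fin n → Bool) → ℝ := fun s => (F s) ⬝ᵥ (QG n G).mulVec (F s) with hf
  have hexp : ∀ s, f s = ∑ i, ∑ j, QG n G i j * (F s i * F s j) := by
    intro s
    simp only [hf, dotProduct, mulVec, Finset.mul_sum]
    apply Finset.sum_congr rfl; intro i _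
    apply Finset.sum_congr rfl; intro j _
    ring
  have hsum : ∑ s : Fin n → Bool, f s = 2^n / 2 := by
    simp only [hexp]
    rw [Finset.sum_comm]
    have inner : ∀ i : Fin n, ∑ s : Fin n → Bool, ∑ j, QG n G i j * (F s i * F s j)
        = 2^n * (2⁻¹ / n) := by
      intro i
      rw [Finset.sum_comm]
      have hterm : ∀ j : Fin n, ∑ s : Fin n → Bool, QG n G i j * (F s i * F s j)
          = if j = i then (2:ℝ)^n * (2⁻¹ / n) else 0 := by
        intro j
        by_cases h : j = i
        · subst h
          simp only [if_true]
          have : ∀ s : Fin n → Bool, QG n G j j * (F s j * F s j) = 2⁻¹ / n := by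
            intro s
            rw [hFF, QG_diag]
            cases hs : s j <;> simp [div_eq_mul_inv]
          rw [Finset.sum_congr rfl (fun s _ => this s), Finset.sum_const]
          simp [Fintype.card_fun]
        · simp only [h, if_false]
          have : ∀ s : Fin n → Bool, QG n G i j * (F s i * F s j)
              = (QG n G i j / n) * ((if s i then (1:ℝ) else -1) * (if s j then (1:ℝ) else -1)) := by
            intro s; rw [hFF]; ring
          rw [Finset.sum_congr rfl (fun s _ => this s), ← Finset.mul_sum,
            sign_prod_sum (fun hij => h hij.symm), mul_zero]
      rw [Finset.sum_congr rfl (fun j _ => hterm j), Finset.sum_ite_eq' Finset.univ i _]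
      simp
    rw [Finset.sum_congr rfl (fun i _ => inner i), Finset.sum_const]
    simp only [Finset.card_univ, Fintype.card_fin, nsmul_eq_mul]
    field_simp
  have hcard : ∑ _s : Fin n → Bool, (1/2 : ℝ) = 2^n / 2 := by
    rw [Finset.sum_const]
    simp [Fintype.card_fun]
    ring
  obtain ⟨s, _, hs⟩ := Finset.exists_le_of_sum_le (Finset.univ_nonempty)
    (le_of_eq (hcard.trans hsum.symm))
  refine ⟨F s, fun i => ?_, hs⟩
  simp only [hF]
  cases h : s i
  · right; simp [neg_div, one_div]
  · left; simp [one_div]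

/-- key numeric bound -/
lemma pow_ratio_le_half {n k : ℕ} (hn : 0 < n) (hk : 0 < k) {δ : ℝ}
    (hδl : 2 * Real.log 2 / k ≤ δ) (hδu : δ < n) :
    ((n : ℝ) / (n + δ)) ^ (n * k) ≤ 1/2 := by
  have hN : (0:ℝ) < n := by exact_mod_cast hn
  have hK : (0:ℝ) < k := by exact_mod_cast hk
  have hδ0 : 0 < δ := lt_of_lt_of_le (by positivity) hδl
  have hr : (1:ℝ) < (n + δ) / n := by
    rw [lt_div_iff₀ hN]; linarith
  have hr0 : (0:ℝ) < (n + δ) / n := by positivity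
  have hlog : δ / (n + δ) ≤ Real.log ((n + δ) / n) := by
    have h := Real.log_le_sub_one_of_pos (show (0:ℝ) < (((n:ℝ) + δ)/n)⁻¹ by positivity)
    rw [Real.log_inv] at h
    have : ((((n:ℝ) + δ)/n)⁻¹ - 1) = -(δ / (n + δ)) := by
      field_simp
      ring
    rw [this] at h
    linarith
  have hmain : Real.log 2 ≤ (n * k : ℕ) * Real.log ((n + δ) / n) := by
    have h1 : Real.log 2 ≤ k * δ / 2 := by
      rw [div_le_iff₀ hK] at hδl; linarith
    have h2 : k * δ / 2 ≤ (n * k : ℝ) * (δ / (n + δ)) := by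
      rw [div_le_iff₀ (by positivity : (0:ℝ) < 2)] at *
      have : (n * k : ℝ) * (δ / (n + δ)) * 2 - k * δ = k * δ * (n - δ) / (n + δ) := by
        field_simp; ring
      nlinarith [mul_pos hK hδ0, div_nonneg (le_of_lt (mul_pos (mul_pos hK hδ0)
        (by linarith : (0:ℝ) < (n:ℝ) - δ))) (by positivity : (0:ℝ) ≤ (n:ℝ) + δ)]
    have h3 : ((n * k : ℕ) : ℝ) = (n : ℝ) * k := by push_cast; ring
    calc Real.log 2 ≤ k * δ / 2 := h1
      _ ≤ (n * k : ℝ) * (δ / (n + δ)) := h2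
      _ ≤ (n * k : ℝ) * Real.log ((n + δ) / n) := by
          apply mul_le_mul_of_nonneg_left hlog (by positivity)
      _ = (n * k : ℕ) * Real.log ((n + δ) / n) := by rw [h3]
  have h2le : (2:ℝ) ≤ ((n + δ) / n) ^ (n * k) := by
    have : ((n + δ) / n) ^ (n * k) = Real.exp ((n * k : ℕ) * Real.log ((n + δ) / n)) := by
      rw [← Real.log_pow, Real.exp_log (by positivity)]
    rw [this, show (2:ℝ) = Real.exp (Real.log 2) from (Real.exp_log (by norm_num)).symm]
    exact Real.exp_le_exp.mpr hmain
  have heq : ((n : ℝ) / (n + δ)) ^ (n * k) = (((n + δ) / n) ^ (n * k))⁻¹ := by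
    rw [← inv_pow, inv_div]
  rw [heq]
  rw [inv_le_comm₀ (by positivity) (by norm_num)]
  exact (by norm_num : ((1:ℝ)/2)⁻¹ = 2).trans_le h2le

/-- away from the hypercube (small `ℓ¹` norm), `p_G` is bounded by
`MaxCut(G)`; consequently the maximum of `p_G` over the sphere is attained on
`T_δ = {x : ‖x‖₂ = 1, ‖x‖₁ ≥ η}` with `η = n/√(n+δ)`. -/
theorem stmt_17 (n : ℕ) (hn : 0 < n) (G : SimpleGraph (Fin n)) [DecidableRel G.Adj]
    (hreg : G.IsRegularOfDegree 3) (k : ℕ) (hk : 0 < k)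
    (δ : ℝ) (hδl : 2 * Real.log 2 / k ≤ δ) (hδu : δ < n) :
    (∀ x : EuclideanSpace ℝ (Fin n), ‖x‖ = 1 →
        (∑ i, |x i|) ≤ n / Real.sqrt (n + δ) → pG n G k x ≤ maxCutVal n G) ∧
    sSup {w : ℝ | ∃ x : EuclideanSpace ℝ (Fin n), ‖x‖ = 1 ∧ w = pG n G k x} =
      sSup {w : ℝ | ∃ x : EuclideanSpace ℝ (Fin n),
        ‖x‖ = 1 ∧ (∑ i, |x i|) ≥ n / Real.sqrt (n + δ) ∧ w = pG n G k x} := by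
  have hN : (0:ℝ) < n := by exact_mod_cast hn
  have hδ0 : 0 < δ := lt_of_lt_of_le (by positivity) hδl
  -- unit-sphere facts
  have hnorm_sq : ∀ x : EuclideanSpace ℝ (Fin n), ‖x‖ = 1 → ∑ i, (x i) ^ 2 = 1 := by
    intro x hx
    rw [EuclideanSpace.norm_eq] at hx
    rw [Real.sqrt_eq_one] at hx
    simpa [Real.norm_eq_abs, sq_abs] using hx
  -- sign vectors have unit norm squared and value in [.., 1]
  have hsign_sq : ∀ x : Fin n → ℝ,
      (∀ i, x i = 1 / Real.sqrt n ∨ x i = -(1 / Real.sqrt n)) → ∑ i, (x i) ^ 2 = 1 := by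
    intro x hx
    have : ∀ i, (x i) ^ 2 = 1 / n := by
      intro i
      rcases hx i with h | h <;> rw [h] <;>
        simp [div_pow, Real.sq_sqrt hN.le]
    rw [Finset.sum_congr rfl (fun i _ => this i), Finset.sum_const]
    simp
    field_simp
  -- the MaxCut set
  set MC := {w : ℝ | ∃ x : Fin n → ℝ,
    (∀ i, x i = 1 / Real.sqrt n ∨ x i = -(1 / Real.sqrt n)) ∧
    w = x ⬝ᵥ (QG n G).mulVec x} with hMC
  have hMCbdd : BddAbove MC := by
    refine ⟨1, fun w hw => ?_⟩
    obtain ⟨x, hx, rfl⟩ := hw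
    exact quad_le_one G hreg x (hsign_sq x hx)
  have hMCne : MC.Nonempty := by
    obtain ⟨x, hx, _⟩ := exists_good_sign hn G
    exact ⟨_, x, hx, rfl⟩
  have hMChalf : 1/2 ≤ maxCutVal n G := by
    obtain ⟨x, hx, hval⟩ := exists_good_sign hn G
    exact le_trans hval (le_csSup hMCbdd ⟨x, hx, rfl⟩)
  -- the product bound on the ℓ¹-small region
  have hprod_half : ∀ x : EuclideanSpace ℝ (Fin n), ‖x‖ = 1 →
      (∑ i, |x i|) ≤ n / Real.sqrt (n + δ) →
      ∏ i, ((n : ℝ) * (x i) ^ 2) ^ k ≤ 1/2 := by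
    intro x hx h1
    have hs0 : (0:ℝ) ≤ ∑ i, |x i| := Finset.sum_nonneg fun i _ => abs_nonneg _
    have habs : ∏ i, |x i| ≤ ((∑ i, |x i|) / n) ^ n :=
      amgm_aux hn _ (fun i => abs_nonneg _)
    have hP : ∏ i, ((n : ℝ) * (x i) ^ 2) ≤ ((∑ i, |x i|)^2 / n) ^ n := by
      have e1 : ∏ i, ((n : ℝ) * (x i) ^ 2) = (n:ℝ)^n * (∏ i, |x i|)^2 := by
        rw [Finset.prod_mul_distrib, Finset.prod_const, Finset.card_univ, Fintype.card_fin,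
          ← Finset.prod_pow]
        congr 1
        exact Finset.prod_congr rfl fun i _ => (sq_abs (x i)).symm
      rw [e1]
      have h2 : (∏ i, |x i|)^2 ≤ (((∑ i, |x i|) / n) ^ n)^2 :=
        pow_le_pow_left₀ (Finset.prod_nonneg fun i _ => abs_nonneg _) habs 2
      calc (n:ℝ)^n * (∏ i, |x i|)^2 ≤ (n:ℝ)^n * (((∑ i, |x i|) / n) ^ n)^2 :=
            mul_le_mul_of_nonneg_left h2 (by positivity)
        _ = ((∑ i, |x i|)^2 / n) ^ n := by
            rw [← pow_mul, mul_comm n 2, pow_mul, ← mul_pow]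
            congr 1
            field_simp
    have hsle : ((∑ i, |x i|)^2 / n) ^ n ≤ ((n:ℝ) / (n + δ)) ^ n := by
      apply pow_le_pow_left₀ (by positivity)
      have hη : ((n:ℝ) / Real.sqrt (n + δ))^2 = (n:ℝ)^2 / (n + δ) := by
        rw [div_pow, Real.sq_sqrt (by positivity)]
      have hs2 : (∑ i, |x i|)^2 ≤ (n:ℝ)^2 / (n + δ) := by
        rw [← hη]; exact pow_le_pow_left₀ hs0 h1 2
      calc (∑ i, |x i|)^2 / n ≤ ((n:ℝ)^2 / (n + δ)) / n := by gcongr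
        _ = (n:ℝ) / (n + δ) := by field_simp
    calc ∏ i, ((n : ℝ) * (x i) ^ 2) ^ k = (∏ i, ((n : ℝ) * (x i) ^ 2)) ^ k :=
          Finset.prod_pow _ _ _
      _ ≤ (((n:ℝ) / (n + δ)) ^ n) ^ k := by
          apply pow_le_pow_left₀ (Finset.prod_nonneg fun i _ => by positivity)
          exact le_trans hP hsle
      _ = ((n:ℝ) / (n + δ)) ^ (n * k) := by rw [← pow_mul]
      _ ≤ 1/2 := pow_ratio_le_half hn hk hδl hδu
  -- product bounded by 1 on the sphere
  have hprod_one : ∀ x : EuclideanSpace ℝ (Fin n), ‖x‖ = 1 →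
      ∏ i, ((n : ℝ) * (x i) ^ 2) ^ k ≤ 1 := by
    intro x hx
    have h := amgm_aux hn (fun i => (x i)^2) (fun i => sq_nonneg _)
    rw [hnorm_sq x hx] at h
    have hPn : ∏ i, ((n : ℝ) * (x i) ^ 2) ≤ 1 := by
      have e1 : ∏ i, ((n : ℝ) * (x i) ^ 2) = (n:ℝ)^n * ∏ i, (x i)^2 := by
        rw [Finset.prod_mul_distrib, Finset.prod_const, Finset.card_univ, Fintype.card_fin]
      rw [e1]
      calc (n:ℝ)^n * ∏ i, (x i)^2 ≤ (n:ℝ)^n * ((1:ℝ)/n)^n :=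
            mul_le_mul_of_nonneg_left h (by positivity)
        _ = 1 := by rw [← mul_pow]; field_simp; simp
    rw [Finset.prod_pow]
    exact pow_le_one₀ (Finset.prod_nonneg fun i _ => by positivity) hPn
  -- pG bounded by 1 on the sphere
  have hpG_le_one : ∀ x : EuclideanSpace ℝ (Fin n), ‖x‖ = 1 → pG n G k x ≤ 1 := by
    intro x hx
    have hq := quad_le_one G hreg x (hnorm_sq x hx)
    have hpr0 : (0:ℝ) ≤ ∏ i, ((n : ℝ) * (x i) ^ 2) ^ k :=
      Finset.prod_nonneg (fun i _ => by positivity)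
    have hpr1 := hprod_one x hx
    unfold pG
    rcases le_or_gt (x ⬝ᵥ (QG n G).mulVec x) 0 with h | h
    · exact le_trans (mul_nonpos_of_nonpos_of_nonneg h hpr0) zero_le_one
    · calc (x ⬝ᵥ (QG n G).mulVec x) * ∏ i, ((n : ℝ) * (x i) ^ 2) ^ k
          ≤ (x ⬝ᵥ (QG n G).mulVec x) * 1 := mul_le_mul_of_nonneg_left hpr1 h.le
        _ ≤ 1 := by rw [mul_one]; exact hq
  -- Part 1
  have part1 : ∀ x : EuclideanSpace ℝ (Fin n), ‖x‖ = 1 →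
      (∑ i, |x i|) ≤ n / Real.sqrt (n + δ) → pG n G k x ≤ maxCutVal n G := by
    intro x hx h1
    have hq := quad_le_one G hreg x (hnorm_sq x hx)
    have hpr0 : (0:ℝ) ≤ ∏ i, ((n : ℝ) * (x i) ^ 2) ^ k :=
      Finset.prod_nonneg (fun i _ => by positivity)
    have hhalf := hprod_half x hx h1
    unfold pG
    rcases le_or_gt (x ⬝ᵥ (QG n G).mulVec x) 0 with h | h
    · exact le_trans (mul_nonpos_of_nonpos_of_nonneg h hpr0)
        (le_trans (by norm_num) hMChalf)
    · calc (x ⬝ᵥ (QG n G).mulVec x) * ∏ i, ((n : ℝ) * (x i) ^ 2) ^ k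
          ≤ 1 * (1/2) := mul_le_mul hq hhalf hpr0 zero_le_one
        _ ≤ maxCutVal n G := by rw [one_mul]; exact hMChalf
  -- sign vectors viewed on the sphere
  have hsign_pt : ∀ y : Fin n → ℝ,
      (∀ i, y i = 1 / Real.sqrt n ∨ y i = -(1 / Real.sqrt n)) → ∀ i, (y i)^2 = 1/n := by
    intro y hy i
    rcases hy i with h | h <;> rw [h] <;>
      simp [div_pow, Real.sq_sqrt hN.le]
  have hηle : (n:ℝ) / Real.sqrt (n + δ) ≤ Real.sqrt n := by
    rw [div_le_iff₀ (by positivity)]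
    rw [← Real.sqrt_mul hN.le]
    have hsq : Real.sqrt ((n:ℝ) * ((n:ℝ) + δ)) ^ 2 = (n:ℝ) * ((n:ℝ) + δ) :=
      Real.sq_sqrt (by positivity)
    nlinarith [Real.sqrt_nonneg ((n:ℝ) * ((n:ℝ) + δ))]
  have hsign_mem : ∀ y : Fin n → ℝ,
      (∀ i, y i = 1 / Real.sqrt n ∨ y i = -(1 / Real.sqrt n)) →
      ∃ x : EuclideanSpace ℝ (Fin n), ‖x‖ = 1 ∧ (∑ i, |x i|) ≥ n / Real.sqrt (n + δ) ∧
        y ⬝ᵥ (QG n G).mulVec y = pG n G k x := by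
    intro y hy
    refine ⟨WithLp.toLp 2 y, ?_, ?_, ?_⟩
    · rw [EuclideanSpace.norm_eq]
      simp only [PiLp.toLp_apply]
      have : ∑ i, ‖y i‖^2 = 1 := by
        simp only [Real.norm_eq_abs, sq_abs]
        exact hsign_sq y hy
      rw [this, Real.sqrt_one]
    · have habs : ∀ i : Fin n, |y i| = 1/Real.sqrt n := by
        intro i
        rcases hy i with h | h <;> rw [h] <;>
          simp [abs_of_nonneg, abs_of_nonpos, one_div, Real.sqrt_nonneg]
      have hsum : ∑ i, |y i| = Real.sqrt n := by
        rw [Finset.sum_congr rfl (fun i _ => habs i), Finset.sum_const,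
          Finset.card_univ, Fintype.card_fin, nsmul_eq_mul, mul_one_div, Real.div_sqrt]
      simp only [PiLp.toLp_apply]
      rw [hsum]
      exact hηle
    · unfold pG
      simp only [PiLp.toLp_apply, WithLp.ofLp_toLp]
      have hone : ∀ i : Fin n, ((n:ℝ) * (y i)^2)^k = 1 := by
        intro i
        rw [hsign_pt y hy i]
        rw [mul_one_div, div_self hN.ne', one_pow]
      rw [Finset.prod_congr rfl (fun i _ => hone i), Finset.prod_const_one, mul_one]
  -- Part 2
  have hMCdef : maxCutVal n G = sSup MC := rfl
  set S := {w : ℝ | ∃ x : EuclideanSpace ℝ (Fin n), ‖x‖ = 1 ∧ w = pG n G k x} with hS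
  set T := {w : ℝ | ∃ x : EuclideanSpace ℝ (Fin n),
      ‖x‖ = 1 ∧ (∑ i, |x i|) ≥ n / Real.sqrt (n + δ) ∧ w = pG n G k x} with hT
  have hTsubS : T ⊆ S := by
    rintro w ⟨x, h1, _, h3⟩
    exact ⟨x, h1, h3⟩
  have hSbdd : BddAbove S := by
    refine ⟨1, ?_⟩
    rintro w ⟨x, h1, rfl⟩
    exact hpG_le_one x h1
  have hTbdd : BddAbove T := BddAbove.mono hTsubS hSbdd
  have hTne : T.Nonempty := by
    obtain ⟨y, hy, _⟩ := exists_good_sign hn G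
    obtain ⟨x', h1, h2, h3⟩ := hsign_mem y hy
    exact ⟨_, x', h1, h2, rfl⟩
  have hMCle : maxCutVal n G ≤ sSup T := by
    rw [hMCdef]
    apply csSup_le hMCne
    rintro w ⟨y, hy, rfl⟩
    obtain ⟨x', h1, h2, h3⟩ := hsign_mem y hy
    exact le_csSup hTbdd ⟨x', h1, h2, h3⟩
  refine ⟨part1, le_antisymm ?_ (csSup_le_csSup hSbdd hTne hTsubS)⟩
  apply csSup_le (hTne.mono hTsubS)
  rintro w ⟨x, hx, rfl⟩
  rcases le_total (∑ i, |x i|) ((n:ℝ) / Real.sqrt (n + δ)) with h | h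
  · exact le_trans (part1 x hx h) hMCle
  · exact le_csSup hTbdd ⟨x, hx, h, rfl⟩
end

section
/- There exists a universal constant C such that for every integer k ≥ C and every simple 3-regular graph G (on any number n of vertices, with at least one edge), Opt(G) < (332/331) · MaxCut(G), where Q_G = (1/2)(I_n − A_G/3), MaxCut(G) = max_{x ∈ {±1/√n}^n} x^T Q_G x, and Opt(G) = max_{‖x‖_2=1} x^T Q_G x · ∏_{i=1}^n (n x_i^2)^k. -/
open Matrix

/-- `Opt(G) = max_{‖x‖₂=1} xᵀ Q_G x · ∏ᵢ (n xᵢ²)^k`. -/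
noncomputable def optGVal (n : ℕ) (G : SimpleGraph (Fin n)) [DecidableRel G.Adj]
    (k : ℕ) : ℝ :=
  sSup {w : ℝ | ∃ x : EuclideanSpace ℝ (Fin n), ‖x‖ = 1 ∧
    w = (x ⬝ᵥ (QG n G).mulVec x) * ∏ i, ((n : ℝ) * (x i) ^ 2) ^ k}

namespace S18

open Finset

variable {n : ℕ} {G : SimpleGraph (Fin n)} [DecidableRel G.Adj]


lemma rowsum (hreg : G.IsRegularOfDegree 3) (i : Fin n) :
    ∑ j, G.adjMatrix ℝ i j = 3 := by
  have h := hreg i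
  rw [SimpleGraph.degree, SimpleGraph.neighborFinset_eq_filter] at h
  simp only [SimpleGraph.adjMatrix_apply, Finset.sum_boole]
  rw [h]; norm_num

lemma colsum (hreg : G.IsRegularOfDegree 3) (j : Fin n) :
    ∑ i, G.adjMatrix ℝ i j = 3 := by
  have : ∀ i, G.adjMatrix ℝ i j = G.adjMatrix ℝ j i := fun i => by
    simp [SimpleGraph.adjMatrix_apply, G.adj_comm]
  simp_rw [this]; exact rowsum hreg j

lemma dot_self_eq (x : Fin n → ℝ) : x ⬝ᵥ x = ∑ i, x i ^ 2 := by
  simp [dotProduct, sq]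

lemma cs (u v : Fin n → ℝ) :
    (u ⬝ᵥ v)^2 ≤ (∑ i, u i^2) * (∑ i, v i^2) := by
  simpa [dotProduct] using Finset.sum_mul_sq_le_sq_mul_sq Finset.univ u v

lemma sumsq_mulVec_le (hreg : G.IsRegularOfDegree 3) (v : Fin n → ℝ) :
    ∑ i, ((G.adjMatrix ℝ).mulVec v i)^2 ≤ 9 * ∑ i, v i ^ 2 := by
  set A := G.adjMatrix ℝ with hA
  have idem : ∀ i j, A i j * A i j = A i j := by
    intro i j; rw [hA]; by_cases h : G.Adj i j <;> simp [SimpleGraph.adjMatrix_apply, h]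
  have h1 : ∀ i, ((A.mulVec v) i)^2 ≤ 3 * ∑ j, A i j * v j ^ 2 := by
    intro i
    have hcs := Finset.sum_mul_sq_le_sq_mul_sq Finset.univ (fun j => A i j)
      (fun j => A i j * v j)
    have e1 : ∑ j, A i j * (A i j * v j) = A.mulVec v i := by
      simp only [mulVec, dotProduct]
      refine Finset.sum_congr rfl fun j _ => ?_
      rw [← mul_assoc, idem]
    have e2 : ∑ j, (A i j)^2 = (3:ℝ) := by
      simp_rw [sq, idem]; exact rowsum hreg i
    have e3 : ∀ j, (A i j * v j)^2 = A i j * v j ^2 := by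
      intro j; rw [mul_pow, sq, idem]
    calc ((A.mulVec v) i)^2 = (∑ j, A i j * (A i j * v j))^2 := by rw [e1]
      _ ≤ (∑ j, (A i j)^2) * (∑ j, (A i j * v j)^2) := hcs
      _ = 3 * ∑ j, A i j * v j ^2 := by rw [e2]; congr 1; exact Finset.sum_congr rfl fun j _ => e3 j
  calc ∑ i, ((A.mulVec v) i)^2 ≤ ∑ i, 3 * ∑ j, A i j * v j ^2 :=
        Finset.sum_le_sum fun i _ => h1 i
    _ = 3 * ∑ j, (∑ i, A i j) * v j ^2 := by
        rw [← Finset.mul_sum, Finset.sum_comm]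
        congr 1; refine Finset.sum_congr rfl fun j _ => ?_
        rw [Finset.sum_mul]
    _ = 9 * ∑ i, v i ^2 := by
        simp_rw [hA, colsum hreg]; rw [← Finset.mul_sum]; ring

lemma abs_le_sqrt_mul_sqrt {a su sv : ℝ} (hsu : 0 ≤ su) (hsv : 0 ≤ sv)
    (h : a^2 ≤ su * sv) : |a| ≤ Real.sqrt su * Real.sqrt sv := by
  rw [← Real.sqrt_mul hsu, ← Real.sqrt_sq_eq_abs]
  exact Real.sqrt_le_sqrt h

lemma bilinA (hreg : G.IsRegularOfDegree 3) (u v : Fin n → ℝ) :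
    |u ⬝ᵥ (G.adjMatrix ℝ).mulVec v| ≤
      3 * (Real.sqrt (∑ i, u i^2) * Real.sqrt (∑ i, v i^2)) := by
  have h2 : (u ⬝ᵥ (G.adjMatrix ℝ).mulVec v)^2 ≤ (9 * ∑ i, u i^2) * (∑ i, v i^2) := by
    calc (u ⬝ᵥ (G.adjMatrix ℝ).mulVec v)^2
        ≤ (∑ i, u i^2) * (∑ i, ((G.adjMatrix ℝ).mulVec v i)^2) := cs u _
      _ ≤ (∑ i, u i^2) * (9 * ∑ i, v i^2) := by
          refine mul_le_mul_of_nonneg_left (sumsq_mulVec_le hreg v) ?_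
          positivity
      _ = (9 * ∑ i, u i^2) * (∑ i, v i^2) := by ring
  have := abs_le_sqrt_mul_sqrt (by positivity) (by positivity) h2
  calc |u ⬝ᵥ (G.adjMatrix ℝ).mulVec v| ≤ Real.sqrt (9 * ∑ i, u i^2) * Real.sqrt (∑ i, v i^2) := this
    _ = 3 * (Real.sqrt (∑ i, u i^2) * Real.sqrt (∑ i, v i^2)) := by
        rw [Real.sqrt_mul (by norm_num : (0:ℝ) ≤ 9), show Real.sqrt 9 = 3 by
          rw [show (9:ℝ) = 3^2 by norm_num, Real.sqrt_sq (by norm_num : (0:ℝ) ≤ 3)]]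
        ring

lemma quadform (u v : Fin n → ℝ) :
    u ⬝ᵥ (QG n G).mulVec v
      = 2⁻¹ * (u ⬝ᵥ v) - 6⁻¹ * (u ⬝ᵥ (G.adjMatrix ℝ).mulVec v) := by
  unfold QG
  rw [smul_mulVec, sub_mulVec, one_mulVec, smul_mulVec, dotProduct_smul,
    dotProduct_sub, dotProduct_smul, smul_eq_mul, smul_eq_mul]
  ring

lemma bilinQ (hreg : G.IsRegularOfDegree 3) (u v : Fin n → ℝ) :
    |u ⬝ᵥ (QG n G).mulVec v| ≤ Real.sqrt (∑ i, u i^2) * Real.sqrt (∑ i, v i^2) := by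
  rw [quadform]
  have h1 : |u ⬝ᵥ v| ≤ Real.sqrt (∑ i, u i^2) * Real.sqrt (∑ i, v i^2) :=
    abs_le_sqrt_mul_sqrt (by positivity) (by positivity) (cs u v)
  have h2 := bilinA hreg u v
  calc |2⁻¹ * (u ⬝ᵥ v) - 6⁻¹ * (u ⬝ᵥ (G.adjMatrix ℝ).mulVec v)|
      ≤ |2⁻¹ * (u ⬝ᵥ v)| + |6⁻¹ * (u ⬝ᵥ (G.adjMatrix ℝ).mulVec v)| := abs_sub _ _
    _ = 2⁻¹ * |u ⬝ᵥ v| + 6⁻¹ * |u ⬝ᵥ (G.adjMatrix ℝ).mulVec v| := by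
        rw [abs_mul, abs_mul, abs_inv, abs_inv]; norm_num
    _ ≤ Real.sqrt (∑ i, u i^2) * Real.sqrt (∑ i, v i^2) := by nlinarith [h1, h2]

lemma quad_bounds (hreg : G.IsRegularOfDegree 3) (x : Fin n → ℝ)
    (hS : ∑ i, x i ^2 = 1) :
    0 ≤ x ⬝ᵥ (QG n G).mulVec x ∧ x ⬝ᵥ (QG n G).mulVec x ≤ 1 := by
  have hA := bilinA hreg x x
  rw [hS, Real.sqrt_one, mul_one, mul_one] at hA
  rw [quadform, dot_self_eq, hS]
  constructor <;> [nlinarith [abs_le.mp hA]; nlinarith [abs_le.mp hA]]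


lemma pt_bound (b : ℝ) (hb : 0 ≤ b) :
    b ≤ Real.exp ((b - 1) - (Real.sqrt b - 1)^2) := by
  rcases eq_or_lt_of_le hb with h | h
  · exact le_of_lt (by rw [← h]; exact Real.exp_pos _)
  · have hsq : Real.sqrt b ^ 2 = b := Real.sq_sqrt hb
    have hlog : Real.log (Real.sqrt b) ≤ Real.sqrt b - 1 :=
      Real.log_le_sub_one_of_pos (Real.sqrt_pos.mpr h)
    have h2 : Real.log b = 2 * Real.log (Real.sqrt b) := by
      rw [Real.log_sqrt hb]; ring
    have : Real.log b ≤ (b - 1) - (Real.sqrt b - 1)^2 := by nlinarith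
    calc b = Real.exp (Real.log b) := (Real.exp_log h).symm
      _ ≤ _ := Real.exp_le_exp.mpr this

lemma prod_bound {n : ℕ} (hn : 0 < n) (x : Fin n → ℝ) (hS : ∑ i, x i ^2 = 1) :
    ∏ i, ((n:ℝ) * x i ^2) ≤
      Real.exp (-(n * ∑ i, (|x i| - 1/Real.sqrt n)^2)) := by
  have hn' : (0:ℝ) < n := by exact_mod_cast hn
  have key : ∀ i, ((n:ℝ) * x i ^2) ≤
      Real.exp (((n:ℝ) * x i^2 - 1) - (Real.sqrt n * |x i| - 1)^2) := by
    intro i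
    have := pt_bound ((n:ℝ) * x i ^2) (by positivity)
    rwa [Real.sqrt_mul (le_of_lt hn'), Real.sqrt_sq_eq_abs] at this
  calc ∏ i, ((n:ℝ) * x i ^2)
      ≤ ∏ i, Real.exp (((n:ℝ) * x i^2 - 1) - (Real.sqrt n * |x i| - 1)^2) :=
        Finset.prod_le_prod (fun i _ => by positivity) (fun i _ => key i)
    _ = Real.exp (∑ i, (((n:ℝ) * x i^2 - 1) - (Real.sqrt n * |x i| - 1)^2)) :=
        (Real.exp_sum _ _).symm
    _ = Real.exp (-(n * ∑ i, (|x i| - 1/Real.sqrt n)^2)) := by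
        congr 1
        have hsn : Real.sqrt n ≠ 0 := by positivity
        have e1 : ∀ i, (Real.sqrt n * |x i| - 1)^2 = (n:ℝ) * (|x i| - 1/Real.sqrt n)^2 := by
          intro i
          have : Real.sqrt n * (|x i| - 1/Real.sqrt n) = Real.sqrt n * |x i| - 1 := by
            field_simp
          rw [← this, mul_pow, Real.sq_sqrt (le_of_lt hn')]
        rw [Finset.sum_sub_distrib]
        simp_rw [e1]
        rw [← Finset.mul_sum, Finset.sum_sub_distrib, ← Finset.mul_sum, hS,
          Finset.sum_const, Finset.card_univ, Fintype.card_fin, nsmul_eq_mul, mul_one]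
        ring

lemma sign_sumsq {n : ℕ} (hn : 0 < n) (x : Fin n → ℝ)
    (hx : ∀ i, x i = 1 / Real.sqrt n ∨ x i = -(1 / Real.sqrt n)) :
    ∑ i, x i ^2 = 1 := by
  have hn' : (0:ℝ) < n := by exact_mod_cast hn
  have e : ∀ i, x i ^2 = 1/(n:ℝ) := by
    intro i
    have h2 : (1 / Real.sqrt n)^2 = 1/(n:ℝ) := by
      rw [div_pow, one_pow, Real.sq_sqrt (le_of_lt hn')]
    rcases hx i with h | h <;> rw [h]
    · exact h2
    · rw [neg_pow]; simp [h2]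
  simp_rw [e]
  rw [Finset.sum_const, Finset.card_univ, Fintype.card_fin, nsmul_eq_mul]
  field_simp


lemma flip_sum_zero {n : ℕ} {i j : Fin n} (hij : i ≠ j) :
    ∑ σ : Fin n → Bool,
      ((if σ i then (1:ℝ) else -1) * (if σ j then (1:ℝ) else -1)) = 0 := by
  have hinv : Function.Involutive
      (fun σ : Fin n → Bool => Function.update σ i (!σ i)) := by
    intro σ; funext a
    by_cases h : a = i
    · subst h; simp [Function.update_self]
    · simp [Function.update_of_ne h]
  set e := hinv.toPerm with he
  set f : (Fin n → Bool) → ℝ :=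
    fun σ => (if σ i then (1:ℝ) else -1) * (if σ j then (1:ℝ) else -1) with hf
  have hneg : ∀ σ, f (e σ) = - f σ := by
    intro σ
    have h1 : (e σ) i = !σ i := Function.update_self _ _ _
    have h2 : (e σ) j = σ j := Function.update_of_ne (Ne.symm hij) _ _
    rw [hf]; simp only [h1, h2]
    cases σ i <;> cases σ j <;> norm_num
  have := Equiv.sum_comp e f
  simp_rw [hneg] at this
  rw [Finset.sum_neg_distrib] at this
  linarith

lemma exists_good_signs {n : ℕ} (G : SimpleGraph (Fin n)) [DecidableRel G.Adj] :
    ∃ s : Fin n → ℝ, (∀ i, s i = 1 ∨ s i = -1) ∧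
      s ⬝ᵥ (G.adjMatrix ℝ).mulVec s ≤ 0 := by
  set F : (Fin n → Bool) → ℝ := fun σ =>
    (fun i => if σ i then (1:ℝ) else -1) ⬝ᵥ
      (G.adjMatrix ℝ).mulVec (fun i => if σ i then (1:ℝ) else -1) with hF
  have hsum : ∑ σ : Fin n → Bool, F σ = 0 := by
    have expand : ∀ σ, F σ = ∑ i, ∑ j, (G.adjMatrix ℝ i j) *
        ((if σ i then (1:ℝ) else -1) * (if σ j then (1:ℝ) else -1)) := by
      intro σ
      rw [hF]
      simp only [dotProduct, mulVec]
      refine Finset.sum_congr rfl fun i _ => ?_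
      rw [Finset.mul_sum]
      refine Finset.sum_congr rfl fun j _ => ?_
      ring
    simp_rw [expand]
    rw [Finset.sum_comm]
    refine Finset.sum_eq_zero fun i _ => ?_
    rw [Finset.sum_comm]
    refine Finset.sum_eq_zero fun j _ => ?_
    rw [← Finset.mul_sum]
    by_cases hij : i = j
    · subst hij; simp [SimpleGraph.adjMatrix_apply]
    · rw [flip_sum_zero hij, mul_zero]
  have hne : (Finset.univ : Finset (Fin n → Bool)).Nonempty := Finset.univ_nonempty
  obtain ⟨σ, _, hσ⟩ := Finset.exists_le_of_sum_le hne
    (by rw [hsum, Finset.sum_const_zero] : ∑ σ : Fin n → Bool, F σ ≤ ∑ _σ : Fin n → Bool, (0:ℝ))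
  exact ⟨fun i => if σ i then 1 else -1, fun i => by by_cases h : σ i <;> simp [h], hσ⟩

lemma n_ge_four {n : ℕ} {G : SimpleGraph (Fin n)} [DecidableRel G.Adj]
    (hreg : G.IsRegularOfDegree 3) (hedge : ∃ u v, G.Adj u v) : 4 ≤ n := by
  obtain ⟨u, v, -⟩ := hedge
  have h3 : (G.neighborFinset u).card = 3 := hreg u
  have hu : u ∉ G.neighborFinset u := by
    simp [SimpleGraph.mem_neighborFinset]
  have h4 : (insert u (G.neighborFinset u)).card = 4 := by
    rw [Finset.card_insert_of_notMem hu, h3]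
  calc 4 = (insert u (G.neighborFinset u)).card := h4.symm
    _ ≤ (Finset.univ : Finset (Fin n)).card := Finset.card_le_univ _
    _ = n := by rw [Finset.card_univ, Fintype.card_fin]

lemma maxcut_bdd (hreg : G.IsRegularOfDegree 3) (hn : 0 < n) :
    BddAbove {w : ℝ | ∃ x : Fin n → ℝ,
      (∀ i, x i = 1 / Real.sqrt n ∨ x i = -(1 / Real.sqrt n)) ∧
      w = x ⬝ᵥ (QG n G).mulVec x} := by
  refine ⟨1, ?_⟩
  rintro w ⟨x, hx, rfl⟩
  exact (quad_bounds hreg x (sign_sumsq hn x hx)).2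

lemma half_le_maxCut (hreg : G.IsRegularOfDegree 3) (hn : 0 < n) :
    1/2 ≤ maxCutVal n G := by
  obtain ⟨s, hs, hsA⟩ := exists_good_signs G
  set x : Fin n → ℝ := (1/Real.sqrt n) • s with hxdef
  have hx : ∀ i, x i = 1 / Real.sqrt n ∨ x i = -(1 / Real.sqrt n) := by
    intro i
    rcases hs i with h | h
    · left; simp [hxdef, h]
    · right; simp [hxdef, h]
  have hmem : (x ⬝ᵥ (QG n G).mulVec x) ∈ {w : ℝ | ∃ x : Fin n → ℝ,
      (∀ i, x i = 1 / Real.sqrt n ∨ x i = -(1 / Real.sqrt n)) ∧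
      w = x ⬝ᵥ (QG n G).mulVec x} := ⟨x, hx, rfl⟩
  have hxAx : x ⬝ᵥ (G.adjMatrix ℝ).mulVec x ≤ 0 := by
    rw [hxdef, Matrix.mulVec_smul, dotProduct_smul, smul_dotProduct, smul_eq_mul, smul_eq_mul]
    have h0 : (0:ℝ) ≤ 1/Real.sqrt n := by positivity
    nlinarith [mul_nonpos_of_nonneg_of_nonpos (mul_nonneg h0 h0) hsA]
  have hval : 1/2 ≤ x ⬝ᵥ (QG n G).mulVec x := by
    rw [quadform, dot_self_eq x, sign_sumsq hn x hx]
    nlinarith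
  exact hval.trans (le_csSup (maxcut_bdd hreg hn) hmem)

lemma key_bound (hreg : G.IsRegularOfDegree 3) (hn : 4 ≤ n) {k : ℕ}
    (hk : 10000000 ≤ k) (x : Fin n → ℝ) (hS : ∑ i, x i ^2 = 1) :
    (x ⬝ᵥ (QG n G).mulVec x) * ∏ i, ((n : ℝ) * (x i) ^ 2) ^ k
      ≤ maxCutVal n G + 1/1000 := by
  have hn0 : 0 < n := by omega
  have hnR : (4:ℝ) ≤ n := by exact_mod_cast hn
  have hM0 : (0:ℝ) ≤ maxCutVal n G := le_trans (by norm_num) (half_le_maxCut hreg hn0)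
  set t : ℝ := ∑ i, (|x i| - 1/Real.sqrt n)^2 with htdef
  have ht0 : 0 ≤ t := Finset.sum_nonneg fun i _ => sq_nonneg _
  have hP := prod_bound hn0 x hS
  have hP0 : (0:ℝ) ≤ ∏ i, ((n:ℝ) * x i ^2) :=
    Finset.prod_nonneg fun i _ => by positivity
  have hprodpow : ∏ i, ((n:ℝ) * (x i) ^ 2) ^ k = (∏ i, ((n:ℝ) * x i ^2))^k :=
    (Finset.prod_pow _ _ _)
  have hQ := quad_bounds hreg x hS
  rw [hprodpow]
  by_cases hcase : t ≤ 1/4000000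
  · -- close to a sign vector
    set y : Fin n → ℝ := fun i => if 0 ≤ x i then 1/Real.sqrt n else -(1/Real.sqrt n)
      with hydef
    have hy : ∀ i, y i = 1 / Real.sqrt n ∨ y i = -(1 / Real.sqrt n) := by
      intro i; by_cases h : 0 ≤ x i
      · left; simp [hydef, h]
      · right; simp [hydef, h]
    have hyS : ∑ i, y i ^2 = 1 := sign_sumsq hn0 y hy
    have hdiff : ∑ i, (x i - y i)^2 = t := by
      rw [htdef]
      refine Finset.sum_congr rfl fun i _ => ?_
      by_cases h : 0 ≤ x i
      · rw [hydef]; simp only [h, if_true]; rw [abs_of_nonneg h]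
      · rw [hydef]; simp only [h, if_false]
        rw [abs_of_neg (lt_of_not_ge h)]; ring
    have hsub : ∑ i, ((x - y) i)^2 = t := by
      simpa [Pi.sub_apply] using hdiff
    have b1 := bilinQ hreg (x - y) x
    have b2 := bilinQ hreg y (x - y)
    rw [hsub, hS, Real.sqrt_one, mul_one] at b1
    rw [hsub, hyS, Real.sqrt_one, one_mul] at b2
    have hsplit : x ⬝ᵥ (QG n G).mulVec x - y ⬝ᵥ (QG n G).mulVec y
        = (x - y) ⬝ᵥ (QG n G).mulVec x + y ⬝ᵥ (QG n G).mulVec (x - y) := by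
      rw [sub_dotProduct, Matrix.mulVec_sub, dotProduct_sub]; ring
    have hclose : x ⬝ᵥ (QG n G).mulVec x
        ≤ y ⬝ᵥ (QG n G).mulVec y + 2 * Real.sqrt t := by
      have a1 := abs_le.mp b1
      have a2 := abs_le.mp b2
      nlinarith [hsplit]
    have hyM : y ⬝ᵥ (QG n G).mulVec y ≤ maxCutVal n G :=
      le_csSup (maxcut_bdd hreg hn0) ⟨y, hy, rfl⟩
    have hst : Real.sqrt t ≤ 1/2000 := by
      calc Real.sqrt t ≤ Real.sqrt (1/4000000) := Real.sqrt_le_sqrt hcase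
        _ = 1/2000 := by
          rw [show (1/4000000:ℝ) = (1/2000)^2 by norm_num,
            Real.sqrt_sq (by norm_num : (0:ℝ) ≤ 1/2000)]
    have hPk1 : (∏ i, ((n:ℝ) * x i ^2))^k ≤ 1 := by
      refine pow_le_one₀ hP0 (hP.trans ?_)
      rw [Real.exp_le_one_iff]
      have : (0:ℝ) ≤ (n:ℝ) * t := by positivity
      linarith
    calc (x ⬝ᵥ (QG n G).mulVec x) * (∏ i, ((n:ℝ) * x i ^2))^k
        ≤ (x ⬝ᵥ (QG n G).mulVec x) * 1 :=
          mul_le_mul_of_nonneg_left hPk1 hQ.1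
      _ = x ⬝ᵥ (QG n G).mulVec x := mul_one _
      _ ≤ maxCutVal n G + 2 * Real.sqrt t := by linarith
      _ ≤ maxCutVal n G + 1/1000 := by linarith
  · -- far from sign vectors: product is tiny
    push_neg at hcase
    have hkR : (10000000:ℝ) ≤ k := by exact_mod_cast hk
    have hnt : (1:ℝ)/1000000 ≤ (n:ℝ) * t := by nlinarith
    have hknt : (10:ℝ) ≤ (k:ℝ) * ((n:ℝ) * t) := by nlinarith
    have hPk : (∏ i, ((n:ℝ) * x i ^2))^k ≤ Real.exp (-(10:ℝ)) := by
      calc (∏ i, ((n:ℝ) * x i ^2))^k ≤ (Real.exp (-((n:ℝ) * t)))^k :=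
            pow_le_pow_left₀ hP0 hP k
        _ = Real.exp ((k:ℝ) * (-((n:ℝ) * t))) := by rw [← Real.exp_nat_mul]
        _ ≤ Real.exp (-(10:ℝ)) := by
            rw [Real.exp_le_exp]; nlinarith
    have hexp : Real.exp (-(10:ℝ)) ≤ 1/1000 := by
      have e2 : (1000:ℝ) ≤ Real.exp 10 := by
        have e1 : Real.exp 1 ^ (10:ℕ) = Real.exp 10 := by
          rw [← Real.exp_nat_mul]; norm_num
        rw [← e1]
        calc (1000:ℝ) ≤ 2.7182818283^(10:ℕ) := by norm_num
          _ ≤ Real.exp 1 ^ (10:ℕ) :=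
            pow_le_pow_left₀ (by norm_num) (le_of_lt Real.exp_one_gt_d9) 10
      rw [Real.exp_neg]
      rw [show (1:ℝ)/1000 = ((1000:ℝ))⁻¹ by norm_num]
      exact inv_anti₀ (by norm_num) e2
    have hPk0 : (0:ℝ) ≤ (∏ i, ((n:ℝ) * x i ^2))^k := pow_nonneg hP0 k
    calc (x ⬝ᵥ (QG n G).mulVec x) * (∏ i, ((n:ℝ) * x i ^2))^k
        ≤ 1 * (∏ i, ((n:ℝ) * x i ^2))^k :=
          mul_le_mul_of_nonneg_right hQ.2 hPk0
      _ = (∏ i, ((n:ℝ) * x i ^2))^k := one_mul _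
      _ ≤ 1/1000 := hPk.trans hexp
      _ ≤ maxCutVal n G + 1/1000 := by linarith


end S18

theorem stmt_18 :
    ∃ C : ℕ, ∀ (k : ℕ), C ≤ k →
      ∀ (n : ℕ) (G : SimpleGraph (Fin n)) [DecidableRel G.Adj],
        G.IsRegularOfDegree 3 → (∃ u v, G.Adj u v) →
        optGVal n G k < (332 / 331 : ℝ) * maxCutVal n G := by
  refine ⟨10000000, ?_⟩
  intro k hk n G _ hreg hedge
  have hn4 : 4 ≤ n := S18.n_ge_four hreg hedge
  have hn0 : 0 < n := by omega
  have hMhalf : 1/2 ≤ maxCutVal n G := S18.half_le_maxCut hreg hn0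
  have hopt : optGVal n G k ≤ maxCutVal n G + 1/1000 := by
    apply Real.sSup_le
    · rintro w ⟨x, hx, rfl⟩
      have hS : ∑ i, (x i : ℝ) ^2 = 1 := by
        rw [EuclideanSpace.norm_eq] at hx
        have hnn : (0:ℝ) ≤ ∑ i, ‖x i‖^2 := Finset.sum_nonneg fun i _ => sq_nonneg _
        have h2 : ∑ i, ‖x i‖^2 = 1 := by
          have h := Real.sq_sqrt hnn
          rw [hx] at h
          simpa using h.symm
        simpa [Real.norm_eq_abs, sq_abs] using h2
      exact S18.key_bound hreg hn4 hk x hS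
    · linarith
  linarith
end
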